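/- Let g ≥ 3 be an integer with g ≡ 3 (mod 4) and let K be a finite group of order 8(g+1) generated by elements x, y satisfying x² = 1, y⁴ = 1, (xy)^{2(g+1)} = 1, and y²(xy)y²(xy)^g = 1. Then K is not a gpnf-group with respect to x, y, xy: there exists an element of K that is not conjugate in K to any power of x, of y, or of xy. -/

import Mathlib

set_option maxHeartbeats 3200000 in
/-- Let `g ≥ 3` with `g ≡ 3 (mod 4)` and let `K` be Kulkarni's group: a finite
group of order `8(g+1)` generated by `x, y` with `x² = 1`, `y⁴ = 1`, `(xy)^{2(g+1)} = 1` and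
`y²(xy)y²(xy)^g = 1`. Then `K` is not a gpnf-group with respect to `x, y, xy`: some element
of `K` is not conjugate to any power of `x`, of `y`, or of `xy`. -/
theorem stmt_19 (g : ℕ) (hg : 3 ≤ g) (hmod : g % 4 = 3)
    {K : Type*} [Group K] [Fintype K] (hcard : Fintype.card K = 8 * (g + 1))
    (x y : K)
    (hgen : Subgroup.closure ({x, y} : Set K) = ⊤)
    (hx : x ^ 2 = 1) (hy : y ^ 4 = 1)
    (hxy : (x * y) ^ (2 * (g + 1)) = 1)
    (hrel : y ^ 2 * (x * y) * y ^ 2 * (x * y) ^ g = 1) :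
    ∃ w : K, (∀ k : ℕ, ¬ IsConj (x ^ k) w) ∧ (∀ k : ℕ, ¬ IsConj (y ^ k) w) ∧
      (∀ k : ℕ, ¬ IsConj ((x * y) ^ k) w) := by
  obtain ⟨q, hq⟩ : ∃ q, g = 4*q+3 := ⟨g/4, by omega⟩
  set z : K := x * y with hzdef
  set u : K := y ^ 2 with hudef
  set m : ℕ := 2 * (g + 1) with hmdef
  -- basic facts
  have hx1 : x⁻¹ = x := by
    rw [pow_two] at hx
    exact inv_eq_of_mul_eq_one_right hx
  have huu : u * u = 1 := by
    rw [hudef, ← pow_add]; exact hy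
  have hui : u⁻¹ = u := inv_eq_of_mul_eq_one_right huu
  have hyi : y⁻¹ = u * y := by
    refine inv_eq_of_mul_eq_one_right ?_
    have h4 : y * (y^2 * y) = y^4 := by group
    rw [hudef, h4]; exact hy
  have hyu : y * u = u * y := by rw [hudef]; group
  have hzm : z ^ (m:ℤ) = 1 := by
    rw [zpow_natCast, hmdef]; exact hxy
  have red : ∀ a b : ℤ, (m:ℤ) ∣ a - b → z ^ a = z ^ b := by
    intro a b ⟨k, hk⟩
    have ha : a = b + (m:ℤ) * k := by linarith
    rw [ha, zpow_add, zpow_mul, hzm, one_zpow, mul_one]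
  have hkey : u * z * u = z ^ (-(g:ℤ)) := by
    have h1 : u * z * u * z^(g:ℤ) = 1 := by
      rw [zpow_natCast]; exact hrel
    have h2 := inv_eq_of_mul_eq_one_right h1
    rw [zpow_neg, ← h2, inv_inv]
  have conjz : ∀ (c w : K) (n : ℤ), c * w ^ n * c⁻¹ = (c * w * c⁻¹) ^ n := by
    intro c w n
    have := (map_zpow (MulAut.conj c) w n).symm
    simpa [MulAut.conj_apply] using this
  have E1 : ∀ n : ℤ, u * z ^ n * u = z ^ (-(g:ℤ) * n) := by
    intro n
    calc u * z ^ n * u = u * z ^ n * u⁻¹ := by rw [hui]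
    _ = (u * z * u⁻¹) ^ n := conjz u z n
    _ = (u * z * u) ^ n := by rw [hui]
    _ = (z ^ (-(g:ℤ))) ^ n := by rw [hkey]
    _ = z ^ (-(g:ℤ) * n) := by rw [← zpow_mul]
  have E1' : ∀ n : ℤ, u * z ^ n = z ^ (-(g:ℤ) * n) * u := by
    intro n
    rw [← E1 n, mul_assoc, huu, mul_one]
  have h1uz : u * z⁻¹ = z ^ (g:ℤ) * u := by
    have h := E1' (-1)
    rw [show (-(g:ℤ) * -1) = (g:ℤ) by ring] at h
    rw [← h, zpow_neg_one]
  have hyz1 : y * z * y⁻¹ = z ^ (g:ℤ) * u := by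
    have h2 : u * z⁻¹ = y * x := by
      rw [hudef, hzdef, mul_inv_rev, hx1]
      group
    have h3 : y * z * y⁻¹ = y * x := by rw [hzdef]; group
    rw [h3, ← h1uz, h2]
  -- t := z^g * u ; key element
  set t : K := z ^ (g:ℤ) * u with htdef
  have E2 : ∀ n : ℤ, y * z ^ n * y⁻¹ = t ^ n := by
    intro n
    rw [conjz, hyz1]
  have hgg : (m:ℤ) ∣ (g:ℤ) * (g:ℤ) - 1 := by
    refine ⟨2*(q:ℤ)+1, ?_⟩
    rw [hmdef]; push_cast [hq]; ring
  have ht2 : t * t = z ^ ((g:ℤ) - 1) := by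
    have : t * t = z ^ (g:ℤ) * (u * z ^ (g:ℤ) * u) := by rw [htdef]; group
    rw [this, E1, ← zpow_add]
    apply red
    have : (g:ℤ) + -(g:ℤ) * (g:ℤ) - ((g:ℤ) - 1) = -((g:ℤ)*(g:ℤ) - 1) := by ring
    rw [this]
    exact hgg.neg_right
  have E4 : ∀ n : ℤ, t ^ (2 * n) = z ^ (((g:ℤ) - 1) * n) := by
    intro n
    rw [zpow_mul, zpow_two t, ht2, ← zpow_mul]
  have E5 : ∀ n : ℤ, t ^ (2 * n + 1) = z ^ (((g:ℤ) - 1) * n + (g:ℤ)) * u := by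
    intro n
    rw [zpow_add, E4, zpow_one, htdef, zpow_add, mul_assoc]
  have hxx : x * x = 1 := by rw [← pow_two]; exact hx
  have hyy : y * y = u := by rw [hudef, pow_two]
  have hyuy : y * u * y⁻¹ = u := by rw [hyu, mul_assoc, mul_inv_cancel, mul_one]
  have hyxeq : u * z⁻¹ = y * x := by
    rw [hudef, hzdef, mul_inv_rev, hx1]; group
  have hyxt : y * x = t := by rw [← hyxeq, h1uz]
  have hxform : x = z * u * y := by
    have h4 : x * y * (y ^ 2 * y) = x * y ^ 4 := by group
    rw [hzdef, hudef, mul_assoc, h4, hy, mul_one]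
  have hxzx : x * z * x⁻¹ = t := by
    rw [← hyxt, hx1, hzdef]
    have : x * (x * y) * x = x * x * (y * x) := by group
    rw [this, hxx, one_mul]
  have hxyx : x * y * x⁻¹ = z ^ (2:ℤ) * u * y := by
    rw [hx1, zpow_two, hzdef, hudef]
    have : x * y * (x * y) * y ^ 2 * y = x * y * x * (y * (y ^ 2 * y)) := by group
    rw [this, show y * (y^2*y) = y ^ 4 by group, hy, mul_one]
  have hxux : x * u * x⁻¹ = z ^ ((g:ℤ)+1) * u := by
    have s1 : x * u * x⁻¹ = (x * y * x⁻¹) * (x * y * x⁻¹) := by rw [hudef, pow_two]; group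
    have s2 : (z^(2:ℤ)*u*y)*(z^(2:ℤ)*u*y)
        = z^(2:ℤ)*(u*(y*z^(2:ℤ)*y⁻¹)*u)*(u⁻¹*(y*u*y⁻¹))*(y*y) := by group
    have s3 : y*z^(2:ℤ)*y⁻¹ = z^((g:ℤ)-1) := by
      rw [E2, zpow_two, ht2]
    rw [s1, hxyx, s2, s3, hyuy, hui, hyy, E1]
    have s4 : z^(2:ℤ)*z^(-(g:ℤ)*((g:ℤ)-1))*(u*u)*u = z^(2 + -(g:ℤ)*((g:ℤ)-1))*u := by
      rw [huu, mul_one, ← zpow_add]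
    rw [show z^(2:ℤ)*(z^(-(g:ℤ)*((g:ℤ)-1)))*(u*u)*u = z^(2:ℤ)*z^(-(g:ℤ)*((g:ℤ)-1))*(u*u)*u from rfl, s4]
    congr 1
    apply red
    have : 2 + -(g:ℤ)*((g:ℤ)-1) - ((g:ℤ)+1) = -((g:ℤ)*(g:ℤ)-1) + ((g:ℤ) - (g:ℤ)) := by ring
    rw [this]
    simpa using hgg.neg_right
  -- normal form for powers of t
  have htform : ∀ n : ℤ, ∃ a : ℤ, ∃ b : Bool, t ^ n = z ^ a * (cond b u 1) := by
    intro n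
    rcases Int.even_or_odd n with ⟨k, hk⟩ | ⟨k, hk⟩
    · exact ⟨((g:ℤ)-1)*k, false, by rw [hk, show k+k = 2*k by ring, E4]; simp⟩
    · exact ⟨((g:ℤ)-1)*k + g, true, by rw [hk, E5]; simp⟩
  -- the predicate for the subgroup generated by z and u
  set PN : K → Prop := fun w => ∃ a : ℤ, ∃ b : Bool, w = z ^ a * (cond b u 1) with hPNdef
  have hPNone : PN 1 := ⟨0, false, by simp⟩
  have hPNz : ∀ a : ℤ, PN (z ^ a) := fun a => ⟨a, false, by simp⟩
  have hPNu : PN u := ⟨0, true, by simp⟩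
  have hPNmul : ∀ v w, PN v → PN w → PN (v * w) := by
    rintro _ _ ⟨a, b, rfl⟩ ⟨A, B, rfl⟩
    cases b <;> cases B
    · exact ⟨a + A, false, by simp [zpow_add]⟩
    · exact ⟨a + A, true, by simp [zpow_add, mul_assoc]⟩
    · refine ⟨a + -(g:ℤ)*A, true, ?_⟩
      simp only [cond, mul_one]
      rw [mul_assoc, E1', zpow_add, mul_assoc]
    · refine ⟨a + -(g:ℤ)*A, false, ?_⟩
      simp only [cond, mul_one]
      rw [mul_assoc, ← mul_assoc u, E1', zpow_add]
      group
      rw [mul_assoc, huu, mul_one]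
  have hPNinv : ∀ w, PN w → PN w⁻¹ := by
    rintro _ ⟨a, b, rfl⟩
    cases b
    · exact ⟨-a, false, by simp [zpow_neg]⟩
    · refine ⟨(g:ℤ) * a, true, ?_⟩
      simp only [cond]
      rw [mul_inv_rev, hui, ← zpow_neg, E1']
      congr 2
      ring
  have hPNconjy : ∀ w, PN w → PN (y * w * y⁻¹) := by
    rintro _ ⟨a, b, rfl⟩
    have h1 : y * (z ^ a * (cond b u 1)) * y⁻¹ = (y * z ^ a * y⁻¹) * (y * (cond b u 1) * y⁻¹) := by
      group
    rw [h1, E2]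
    obtain ⟨a', b', hab⟩ := htform a
    rw [hab]
    cases b
    · simpa using ⟨a', b', rfl⟩
    · simp only [cond]
      rw [hyuy]
      exact hPNmul _ _ ⟨a', b', rfl⟩ hPNu
  have hPNconjx : ∀ w, PN w → PN (x * w * x⁻¹) := by
    rintro _ ⟨a, b, rfl⟩
    have h1 : x * (z ^ a * (cond b u 1)) * x⁻¹ = (x * z ^ a * x⁻¹) * (x * (cond b u 1) * x⁻¹) := by
      group
    rw [h1, conjz, hxzx]
    obtain ⟨a', b', hab⟩ := htform a
    rw [hab]
    cases b
    · simpa using ⟨a', b', rfl⟩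
    · simp only [cond]
      rw [hxux]
      exact hPNmul _ _ ⟨a', b', rfl⟩ ⟨(g:ℤ)+1, true, rfl⟩
  -- generic split of conjugation over a product
  have hsplit : ∀ s a b : K, s * (a * b) * s⁻¹ = (s * a * s⁻¹) * (s * b * s⁻¹) := by
    intro s a b; group
  have hy3 : y * y * y = y⁻¹ := by
    rw [hyi, ← hyy]
  -- generic: build the subgroup of elements n * y^c with n satisfying P0
  have build : ∀ P0 : K → Prop, P0 1 → (∀ v w, P0 v → P0 w → P0 (v * w)) →
      (∀ w, P0 w → P0 w⁻¹) → (∀ w, P0 w → P0 (y * w * y⁻¹)) → P0 u →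
      ∃ S : Subgroup K, ∀ v : K, v ∈ S ↔ ∃ n, P0 n ∧ ∃ c : Bool, v = n * (cond c y 1) := by
    intro P0 h1 hm hi hcy hu0
    refine ⟨{ carrier := {v | ∃ n, P0 n ∧ ∃ c : Bool, v = n * (cond c y 1)},
              one_mem' := ⟨1, h1, false, by simp⟩,
              mul_mem' := ?_, inv_mem' := ?_ }, fun v => Iff.rfl⟩
    · rintro v w ⟨n, hn, c, rfl⟩ ⟨N, hN, C, rfl⟩
      cases c
      · exact ⟨n * N, hm _ _ hn hN, C, by simp [mul_assoc]⟩
      · cases C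
        · exact ⟨n * (y * N * y⁻¹), hm _ _ hn (hcy _ hN), true, by simp only [cond]; group⟩
        · refine ⟨n * (y * N * y⁻¹) * u, hm _ _ (hm _ _ hn (hcy _ hN)) hu0, false, ?_⟩
          simp only [cond]
          rw [mul_one, ← hyy]
          group
    · rintro v ⟨n, hn, c, rfl⟩
      cases c
      · exact ⟨n⁻¹, hi _ hn, false, by simp⟩
      · refine ⟨y⁻¹ * n⁻¹ * y * u, hm _ _ ?_ hu0, true, ?_⟩
        · have h3 := hcy _ (hcy _ (hcy _ (hi _ hn)))
          have h4 : y * (y * (y * n⁻¹ * y⁻¹) * y⁻¹) * y⁻¹ = (y*y*y) * n⁻¹ * (y*y*y)⁻¹ := by group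
          rw [h4, hy3, inv_inv] at h3
          exact h3
        · simp only [cond]
          rw [mul_assoc, ← hyi]
          group
  -- generic normality criterion
  have mknormal : ∀ S : Subgroup K, (∀ w ∈ S, x * w * x⁻¹ ∈ S) →
      (∀ w ∈ S, y * w * y⁻¹ ∈ S) → S.Normal := by
    intro S hcx hcy'
    rw [← Subgroup.normalizer_eq_top_iff]
    have hxn : x ∈ Subgroup.normalizer (S : Set K) := by
      rw [Subgroup.mem_normalizer_iff]
      intro h
      constructor
      · exact hcx h
      · intro hh
        have h3 := hcx _ hh
        have h4 : x * (x * h * x⁻¹) * x⁻¹ = (x * x) * h * (x * x)⁻¹ := by group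
        rw [h4, hxx] at h3
        simpa using h3
    have hyn : y ∈ Subgroup.normalizer (S : Set K) := by
      rw [Subgroup.mem_normalizer_iff]
      intro h
      constructor
      · exact hcy' h
      · intro hh
        have h3 := hcy' _ (hcy' _ (hcy' _ hh))
        have h4 : y * (y * (y * (y * h * y⁻¹) * y⁻¹) * y⁻¹) * y⁻¹
            = (y*y*y) * (y * h * y⁻¹) * (y*y*y)⁻¹ := by group
        rw [h4, hy3, inv_inv] at h3
        have h5 : y⁻¹ * (y * h * y⁻¹) * y = h := by group
        rw [h5] at h3
        exact h3
    have hle : Subgroup.closure ({x, y} : Set K) ≤ Subgroup.normalizer (S : Set K) := by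
      rw [Subgroup.closure_le]
      intro s hs
      simp only [Set.mem_insert_iff, Set.mem_singleton_iff] at hs
      rcases hs with rfl | rfl
      · exact hxn
      · exact hyn
    rw [hgen] at hle
    exact eq_top_iff.mpr hle
  -- the subgroup SN generated by z and u
  obtain ⟨SN, hSN⟩ : ∃ S : Subgroup K, ∀ v : K, v ∈ S ↔ PN v :=
    ⟨{ carrier := setOf PN, one_mem' := hPNone,
       mul_mem' := fun ha hb => hPNmul _ _ ha hb,
       inv_mem' := fun ha => hPNinv _ ha }, fun v => Iff.rfl⟩
  have hSNnormal : SN.Normal := by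
    apply mknormal
    · intro w hw; exact (hSN _).mpr (hPNconjx _ ((hSN _).mp hw))
    · intro w hw; exact (hSN _).mpr (hPNconjy _ ((hSN _).mp hw))
  -- the whole group has normal form z^a u^b y^c
  obtain ⟨S, hS⟩ := build PN hPNone hPNmul hPNinv hPNconjy hPNu
  have hStop : ∀ v : K, ∃ a : ℤ, ∃ b c : Bool, v = z ^ a * (cond b u 1) * (cond c y 1) := by
    have hxS : x ∈ S := (hS x).mpr ⟨z ^ (1:ℤ) * u, ⟨1, true, rfl⟩, true, by
      simp only [cond, zpow_one]; exact hxform⟩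
    have hyS : y ∈ S := (hS y).mpr ⟨1, hPNone, true, by simp⟩
    have hle : Subgroup.closure ({x, y} : Set K) ≤ S := by
      rw [Subgroup.closure_le]
      intro s hs
      simp only [Set.mem_insert_iff, Set.mem_singleton_iff] at hs
      rcases hs with rfl | rfl
      · exact hxS
      · exact hyS
    rw [hgen] at hle
    intro v
    obtain ⟨n, ⟨a, b, rfl⟩, c, rfl⟩ := (hS _).mp (hle (Subgroup.mem_top v))
    exact ⟨a, b, c, rfl⟩
  -- the normal form map is bijective
  haveI : NeZero m := ⟨by omega⟩
  set F : ZMod m × Bool × Bool → K :=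
    fun p => z ^ ((p.1.val : ℤ)) * (cond p.2.1 u 1) * (cond p.2.2 y 1) with hFdef
  have hval : ∀ a : ℤ, z ^ a = z ^ (((a : ZMod m).val : ℤ)) := by
    intro a
    apply red
    rw [← ZMod.intCast_zmod_eq_zero_iff_dvd]
    push_cast
    rw [ZMod.natCast_val, ZMod.cast_id]
    ring
  have hFsurj : Function.Surjective F := by
    intro v
    obtain ⟨a, b, c, rfl⟩ := hStop v
    exact ⟨((a : ZMod m), b, c), by rw [hFdef]; simp only; rw [← hval]⟩
  have hcards : Fintype.card (ZMod m × Bool × Bool) = Fintype.card K := by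
    rw [hcard]
    simp only [Fintype.card_prod, ZMod.card, Fintype.card_bool]
    rw [hmdef]; ring
  have hFinj : Function.Injective F :=
    ((Fintype.bijective_iff_surjective_and_card F).mpr ⟨hFsurj, hcards⟩).injective
  have hNF : ∀ (a A : ℤ) (b B c C : Bool),
      z ^ a * (cond b u 1) * (cond c y 1) = z ^ A * (cond B u 1) * (cond C y 1) →
      ((m:ℤ) ∣ a - A ∧ b = B ∧ c = C) := by
    intro a A b B c C h
    have h2 : F ((a : ZMod m), b, c) = F ((A : ZMod m), B, C) := by
      rw [hFdef]; simp only; rw [← hval, ← hval]; exact h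
    have h3 := hFinj h2
    have h4 : ((a : ZMod m)) = ((A : ZMod m)) := congrArg Prod.fst h3
    have h5 : b = B := congrArg (fun p => p.2.1) h3
    have h6 : c = C := congrArg (fun p => p.2.2) h3
    refine ⟨?_, h5, h6⟩
    have h7 := (ZMod.intCast_eq_intCast_iff a A m).mp h4
    have h8 := h7.dvd
    rw [show a - A = -(A - a) by ring]
    exact h8.neg_right
  have hgZ : (g:ℤ) = 4*(q:ℤ) + 3 := by push_cast [hq]; ring
  -- the even subgroup SM = <y, z^2>
  set PM : K → Prop := fun w => ∃ a : ℤ, ∃ b : Bool, w = z ^ (2*a) * (cond b u 1) with hPMdef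
  have hPMone : PM 1 := ⟨0, false, by simp⟩
  have hPMu : PM u := ⟨0, true, by simp⟩
  have hPMmul : ∀ v w, PM v → PM w → PM (v * w) := by
    rintro _ _ ⟨a, b, rfl⟩ ⟨A, B, rfl⟩
    cases b <;> cases B
    · exact ⟨a + A, false, by rw [show 2*(a+A) = 2*a + 2*A by ring]; simp [zpow_add]⟩
    · exact ⟨a + A, true, by rw [show 2*(a+A) = 2*a + 2*A by ring]; simp [zpow_add, mul_assoc]⟩
    · refine ⟨a + -(g:ℤ)*A, true, ?_⟩
      simp only [cond, mul_one]
      rw [mul_assoc, E1', show 2*(a + -(g:ℤ)*A) = 2*a + -(g:ℤ)*(2*A) by ring, zpow_add, mul_assoc]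
    · refine ⟨a + -(g:ℤ)*A, false, ?_⟩
      simp only [cond, mul_one]
      rw [mul_assoc, ← mul_assoc u, E1', show 2*(a + -(g:ℤ)*A) = 2*a + -(g:ℤ)*(2*A) by ring,
        zpow_add]
      group
      rw [mul_assoc, huu, mul_one]
  have hPMinv : ∀ w, PM w → PM w⁻¹ := by
    rintro _ ⟨a, b, rfl⟩
    cases b
    · exact ⟨-a, false, by rw [show 2*(-a) = -(2*a) by ring]; simp [zpow_neg]⟩
    · refine ⟨(g:ℤ) * a, true, ?_⟩
      simp only [cond]
      rw [mul_inv_rev, hui, ← zpow_neg, E1']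
      congr 2
      ring
  have hPMconjy : ∀ w, PM w → PM (y * w * y⁻¹) := by
    rintro _ ⟨a, b, rfl⟩
    rw [hsplit, E2, E4]
    have hform : z ^ (((g:ℤ)-1)*a) = z ^ (2*((2*(q:ℤ)+1)*a)) := by
      congr 1
      rw [hgZ]; ring
    cases b
    · exact ⟨(2*(q:ℤ)+1)*a, false, by simp only [cond]; rw [hform]; group⟩
    · refine ⟨(2*(q:ℤ)+1)*a, true, ?_⟩
      simp only [cond]
      rw [hyuy, hform]
  obtain ⟨SM, hSM⟩ := build PM hPMone hPMmul hPMinv hPMconjy hPMu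
  have hPMmem : ∀ v, PM v → v ∈ SM := fun v hv => (hSM v).mpr ⟨v, hv, false, by simp⟩
  have hPMz2 : ∀ a' : ℤ, PM (z ^ (2*a')) := fun a' => ⟨a', false, by simp⟩
  have hPMxu : PM (z ^ ((g:ℤ)+1) * u) :=
    ⟨2*(q:ℤ)+2, true, by simp only [cond]; congr 1; rw [hgZ]; ring⟩
  have hform : ∀ a : ℤ, z ^ (((g:ℤ)-1)*a) = z ^ (2*((2*(q:ℤ)+1)*a)) := by
    intro a; congr 1; rw [hgZ]; ring
  have hPMconjx : ∀ v, PM v → PM (x * v * x⁻¹) := by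
    rintro _ ⟨a, b, rfl⟩
    rw [hsplit, conjz, hxzx, E4, hform]
    cases b
    · exact ⟨(2*(q:ℤ)+1)*a, false, by simp only [cond]; group⟩
    · simp only [cond]
      rw [hxux]
      exact hPMmul _ _ (hPMz2 _) hPMxu
  have hSMconjx : ∀ w ∈ SM, x * w * x⁻¹ ∈ SM := by
    intro w hw
    obtain ⟨n, hn, c, rfl⟩ := (hSM _).mp hw
    rw [hsplit]
    refine SM.mul_mem (hPMmem _ (hPMconjx _ hn)) ?_
    cases c
    · simp only [cond]
      simpa using SM.one_mem
    · simp only [cond]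
      rw [hxyx]
      exact (hSM _).mpr ⟨z ^ (2:ℤ) * u, ⟨1, true, by norm_num⟩, true, rfl⟩
  have hSMconjy : ∀ w ∈ SM, y * w * y⁻¹ ∈ SM := by
    intro w hw
    obtain ⟨n, hn, c, rfl⟩ := (hSM _).mp hw
    rw [hsplit]
    refine SM.mul_mem (hPMmem _ (hPMconjy _ hn)) ?_
    cases c
    · simp only [cond]
      simpa using SM.one_mem
    · simp only [cond]
      rw [show y * y * y⁻¹ = y by group]
      exact (hSM _).mpr ⟨1, hPMone, true, by simp⟩
  have hSMnormal : SM.Normal := mknormal SM hSMconjx hSMconjy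
  -- the subgroup SL = <x, z^2 u>
  set cc : K := z ^ (2:ℤ) * u with hccdef
  have hcc2 : cc * cc = z ^ (4:ℤ) := by
    have s1 : cc * cc = z ^ (2:ℤ) * (u * z ^ (2:ℤ) * u) := by rw [hccdef]; group
    rw [s1, E1, ← zpow_add]
    apply red
    rw [hmdef]
    refine ⟨-1, ?_⟩
    push_cast
    ring
  have hccpow : ∀ n : ℤ, cc ^ (2*n) = z ^ (4*n) := by
    intro n
    rw [zpow_mul, zpow_two, hcc2, ← zpow_mul]
  have hccodd : ∀ n : ℤ, cc ^ (2*n+1) = z ^ (4*n+2) * u := by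
    intro n
    rw [zpow_add, hccpow, zpow_one, hccdef, zpow_add, mul_assoc]
  have hgodd : (g:ℤ) = 2*(2*(q:ℤ)+1) + 1 := by rw [hgZ]; ring
  have hxcx : x * cc * x⁻¹ = cc ^ (g:ℤ) := by
    have l1 : x * cc * x⁻¹ = (x * z ^ (2:ℤ) * x⁻¹) * (x * u * x⁻¹) := by
      rw [hccdef]; group
    have l2 : x * z ^ (2:ℤ) * x⁻¹ = z ^ ((g:ℤ)-1) := by
      rw [conjz, hxzx, zpow_two, ht2]
    rw [l1, l2, hxux, ← mul_assoc, ← zpow_add]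
    rw [hgodd, hccodd]
    congr 2
    ring
  have hxccn : ∀ n : ℤ, x * cc ^ n * x⁻¹ = cc ^ ((g:ℤ)*n) := by
    intro n
    rw [conjz, hxcx, ← zpow_mul]
  have hycy : y * cc * y⁻¹ = cc ^ (2*(q:ℤ)+1) := by
    have l1 : y * cc * y⁻¹ = (y * z ^ (2:ℤ) * y⁻¹) * (y * u * y⁻¹) := by
      rw [hccdef]; group
    rw [l1, E2, zpow_two, ht2, hyuy, hccodd]
    congr 2
    rw [hgZ]; ring
  have hyccn : ∀ n : ℤ, y * cc ^ n * y⁻¹ = cc ^ ((2*(q:ℤ)+1)*n) := by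
    intro n
    rw [conjz, hycy, ← zpow_mul]
  have hyxy : y * x * y⁻¹ = cc ^ (g:ℤ) * x := by
    have l1 : y * x * y⁻¹ = z ^ (g:ℤ) * y := by
      rw [show y * x * y⁻¹ = (y * x) * y⁻¹ from rfl, hyxt, hyi, htdef]
      have : z ^ (g:ℤ) * u * (u * y) = z ^ (g:ℤ) * (u * u) * y := by group
      rw [this, huu]
      group
    have l2 : cc ^ (g:ℤ) * x = z ^ (g:ℤ) * y := by
      rw [hgodd, hccodd, hxform]
      have : z ^ (4*(2*(q:ℤ)+1)+2) * u * (z * u * y)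
          = z ^ (4*(2*(q:ℤ)+1)+2) * (u * z * u) * y := by group
      rw [this, hkey, ← zpow_add]
      congr 2
      rw [hgZ]; ring
    rw [l1, ← l2]
  set PL : K → Prop := fun w => ∃ j : ℤ, ∃ d : Bool, w = cc ^ j * (cond d x 1) with hPLdef
  have hPLone : PL 1 := ⟨0, false, by simp⟩
  have hPLx : PL x := ⟨0, true, by simp⟩
  have hPLcc : ∀ j : ℤ, PL (cc ^ j) := fun j => ⟨j, false, by simp⟩
  have hPLmul : ∀ v w, PL v → PL w → PL (v * w) := by
    rintro _ _ ⟨j, d, rfl⟩ ⟨J, D, rfl⟩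
    cases d
    · exact ⟨j + J, D, by simp [zpow_add, mul_assoc]⟩
    · cases D
      · refine ⟨j + (g:ℤ)*J, true, ?_⟩
        simp only [cond, mul_one]
        rw [zpow_add]
        have : cc ^ j * x * cc ^ J = cc ^ j * (x * cc ^ J * x⁻¹) * x := by group
        rw [this, hxccn]
      · refine ⟨j + (g:ℤ)*J, false, ?_⟩
        simp only [cond, mul_one]
        rw [zpow_add]
        have : cc ^ j * x * (cc ^ J * x) = cc ^ j * (x * cc ^ J * x⁻¹) * (x * x) := by group
        rw [this, hxccn, hxx, mul_one]
  have hPLinv : ∀ w, PL w → PL w⁻¹ := by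
    rintro _ ⟨j, d, rfl⟩
    cases d
    · exact ⟨-j, false, by simp [zpow_neg]⟩
    · refine ⟨(g:ℤ)*(-j), true, ?_⟩
      simp only [cond]
      have : cc ^ ((g:ℤ)*(-j)) * x = x * cc ^ (-j) * (x⁻¹ * x) := by rw [← hxccn]; group
      rw [mul_inv_rev, hx1, ← zpow_neg, this]
      group
  obtain ⟨SL, hSL⟩ : ∃ S : Subgroup K, ∀ v : K, v ∈ S ↔ PL v :=
    ⟨{ carrier := setOf PL, one_mem' := hPLone,
       mul_mem' := fun ha hb => hPLmul _ _ ha hb,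
       inv_mem' := fun ha => hPLinv _ ha }, fun v => Iff.rfl⟩
  have hSLnormal : SL.Normal := by
    apply mknormal
    · rintro _ hw
      obtain ⟨j, d, rfl⟩ := (hSL _).mp hw
      refine (hSL _).mpr ?_
      rw [hsplit, hxccn]
      cases d
      · simp only [cond]
        exact hPLmul _ _ (hPLcc _) ⟨0, false, by group; simp⟩
      · simp only [cond]
        rw [show x * x * x⁻¹ = x by rw [mul_assoc, mul_inv_cancel, mul_one]]
        exact hPLmul _ _ (hPLcc _) hPLx
    · rintro _ hw
      obtain ⟨j, d, rfl⟩ := (hSL _).mp hw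
      refine (hSL _).mpr ?_
      rw [hsplit, hyccn]
      cases d
      · simp only [cond]
        exact hPLmul _ _ (hPLcc _) ⟨0, false, by group; simp⟩
      · simp only [cond]
        rw [hyxy]
        exact hPLmul _ _ (hPLcc _) (hPLmul _ _ (hPLcc _) hPLx)
  -- membership facts
  have hm8 : (m:ℤ) = 8*((q:ℤ)+1) := by rw [hmdef]; push_cast [hq]; ring
  have hxSL : x ∈ SL := (hSL x).mpr hPLx
  have hySM : y ∈ SM := (hSM y).mpr ⟨1, hPMone, true, by simp⟩
  have huSM : u ∈ SM := (hSM u).mpr ⟨u, hPMu, false, by simp⟩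
  have huSN : u ∈ SN := (hSN u).mpr hPNu
  have hzSN : z ∈ SN := (hSN z).mpr ⟨1, false, by simp⟩
  have hlhs : z ^ (1:ℤ) * (cond true u 1) * (cond true y 1) = x := by
    simp only [cond]; rw [zpow_one, ← hxform]
  refine ⟨x * u, ?_, ?_, ?_⟩
  · -- not conjugate to a power of x
    intro k hconj
    obtain ⟨cel, hcel⟩ := isConj_iff.mp hconj
    have hwL : x * u ∈ SL := by
      rw [← hcel]
      exact hSLnormal.conj_mem _ (SL.pow_mem hxSL k) cel
    have huL : u ∈ SL := by
      have h2 := SL.mul_mem hxSL hwL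
      rw [← mul_assoc, hxx, one_mul] at h2
      exact h2
    obtain ⟨j, d, hj⟩ := (hSL u).mp huL
    rcases Int.even_or_odd j with ⟨i, hi⟩ | ⟨i, hi⟩
    · rw [hi, show i + i = 2*i by ring, hccpow] at hj
      cases d
      · simp only [cond, mul_one] at hj
        have heq : z ^ (0:ℤ) * (cond true u 1) * (cond false y 1)
            = z ^ (4*i) * (cond false u 1) * (cond false y 1) := by
          simp only [cond]
          rw [zpow_zero, one_mul, mul_one, mul_one, mul_one, ← hj]
        obtain ⟨_, hb, _⟩ := hNF _ _ _ _ _ _ heq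
        simp at hb
      · simp only [cond] at hj
        rw [hxform] at hj
        have heq : z ^ (0:ℤ) * (cond true u 1) * (cond false y 1)
            = z ^ (4*i+1) * (cond true u 1) * (cond true y 1) := by
          simp only [cond]
          rw [zpow_zero, one_mul, mul_one]
          refine hj.trans ?_
          rw [zpow_add, zpow_one]
          group
        obtain ⟨_, _, hcB⟩ := hNF _ _ _ _ _ _ heq
        simp at hcB
    · rw [hi, hccodd] at hj
      cases d
      · simp only [cond, mul_one] at hj
        have heq : z ^ (0:ℤ) * (cond true u 1) * (cond false y 1)
            = z ^ (4*i+2) * (cond true u 1) * (cond false y 1) := by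
          simp only [cond]
          rw [zpow_zero, one_mul, mul_one, mul_one, ← hj]
        obtain ⟨hdvd, _, _⟩ := hNF _ _ _ _ _ _ heq
        obtain ⟨kk, hkk⟩ := hdvd
        have h2 : (0:ℤ) - (4*i+2) = 8*(((q:ℤ)+1)*kk) := by rw [hkk, hm8]; ring
        obtain ⟨X, hX⟩ : ∃ X : ℤ, (0:ℤ) - (4*i+2) = 8*X := ⟨_, h2⟩
        omega
      · simp only [cond] at hj
        rw [hxform] at hj
        have heq : z ^ (0:ℤ) * (cond true u 1) * (cond false y 1)
            = z ^ (4*i+2+ -(g:ℤ)) * (cond false u 1) * (cond true y 1) := by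
          simp only [cond]
          rw [zpow_zero, one_mul, mul_one, mul_one]
          refine hj.trans ?_
          have h9 : z ^ (4*i+2) * u * (z * u * y) = z ^ (4*i+2) * (u * z * u) * y := by group
          rw [h9, hkey, zpow_add]
          group
        obtain ⟨_, hb, _⟩ := hNF _ _ _ _ _ _ heq
        simp at hb
  · -- not conjugate to a power of y
    intro k hconj
    obtain ⟨cel, hcel⟩ := isConj_iff.mp hconj
    have hwM : x * u ∈ SM := by
      rw [← hcel]
      exact hSMnormal.conj_mem _ (SM.pow_mem hySM k) cel
    have hxM : x ∈ SM := by
      have h2 := SM.mul_mem hwM huSM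
      rw [mul_assoc, huu, mul_one] at h2
      exact h2
    obtain ⟨n, ⟨a, b, hn⟩, c, hc⟩ := (hSM x).mp hxM
    rw [hn] at hc
    have heq : z ^ (1:ℤ) * (cond true u 1) * (cond true y 1)
        = z ^ (2*a) * (cond b u 1) * (cond c y 1) := by
      rw [hlhs, hc]
    obtain ⟨hdvd, _, _⟩ := hNF _ _ _ _ _ _ heq
    obtain ⟨kk, hkk⟩ := hdvd
    have h2 : (1:ℤ) - 2*a = 8*(((q:ℤ)+1)*kk) := by rw [hkk, hm8]; ring
    obtain ⟨X, hX⟩ : ∃ X : ℤ, (1:ℤ) - 2*a = 8*X := ⟨_, h2⟩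
    omega
  · -- not conjugate to a power of xy
    intro k hconj
    obtain ⟨cel, hcel⟩ := isConj_iff.mp hconj
    have hwN : x * u ∈ SN := by
      rw [← hcel]
      exact hSNnormal.conj_mem _ (SN.pow_mem hzSN k) cel
    have hxN : x ∈ SN := by
      have h2 := SN.mul_mem hwN huSN
      rw [mul_assoc, huu, mul_one] at h2
      exact h2
    obtain ⟨a, b, hab⟩ := (hSN x).mp hxN
    have heq : z ^ (1:ℤ) * (cond true u 1) * (cond true y 1)
        = z ^ a * (cond b u 1) * (cond false y 1) := by
      rw [hlhs, hab]
      simp only [cond]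
      rw [mul_one]
    obtain ⟨_, _, hcB⟩ := hNF _ _ _ _ _ _ heq
    simp at hcB
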